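/- arXiv:2110.07071 — 3 statements merged into one kernel-verified Lean document; each statement's English description precedes it below -/
import Mathlib

section
/- Let (A, B) be an integral table algebra (possibly noncommutative) with splitting field K and Galois group G = Gal(K/ℚ), which acts faithfully on the rows of the character table P = (χ(b))_{χ ∈ Irr(A), b ∈ B}. Let H be the set of σ ∈ G such that there exists a permutation b ↦ b^σ of B with (χ(b))^σ = χ(b^σ) for all irreducible characters χ and all b ∈ B. Then H is a subgroup of G contained in the center Z(G). -/
/-- Let `K` be the splitting field (a finite Galois extension of
`ℚ`) of an integral table algebra, with Galois group `G` acting faithfully on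
the rows of the character table `P`.  The set `H` of Galois automorphisms whose
entrywise action on `P` is realized by a permutation of the basis (columns) is
a subgroup of `G` contained in the center `Z(G)`. -/
theorem stmt3 {K : Type*} [Field K] [Algebra ℚ K] [FiniteDimensional ℚ K]
    {r : ℕ} {X : Type*} [Fintype X]
    (P : X → Fin r → K)
    (hrows : Function.Injective fun χ : X => (P χ : Fin r → K))
    (ρ : (K ≃ₐ[ℚ] K) →* Equiv.Perm X) (hρ_inj : Function.Injective ρ)
    (hρ : ∀ (τ : K ≃ₐ[ℚ] K) (χ : X) (j : Fin r), τ (P χ j) = P (ρ τ χ) j)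
    (H : Set (K ≃ₐ[ℚ] K))
    (hH : H = {τ : K ≃ₐ[ℚ] K |
      ∃ π : Equiv.Perm (Fin r), ∀ (χ : X) (j : Fin r), τ (P χ j) = P χ (π j)}) :
    ∃ H' : Subgroup (K ≃ₐ[ℚ] K), (H' : Set (K ≃ₐ[ℚ] K)) = H ∧
      H' ≤ Subgroup.center (K ≃ₐ[ℚ] K) := by
  subst hH
  refine ⟨⟨⟨⟨{τ : K ≃ₐ[ℚ] K |
      ∃ π : Equiv.Perm (Fin r), ∀ (χ : X) (j : Fin r), τ (P χ j) = P χ (π j)},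
      ?_⟩, ⟨1, by simp⟩⟩, ?_⟩, rfl, ?_⟩
  · rintro τ₁ τ₂ ⟨π₁, h₁⟩ ⟨π₂, h₂⟩
    exact ⟨π₁ * π₂, fun χ j => by
      simp only [AlgEquiv.mul_apply, Equiv.Perm.mul_apply, h₂, h₁]⟩
  · rintro τ ⟨π, h⟩
    refine ⟨π⁻¹, fun χ j => ?_⟩
    have := h χ (π⁻¹ j)
    rw [Equiv.Perm.coe_inv, Equiv.apply_symm_apply] at this
    rw [← this]
    exact τ.symm_apply_apply _
  · rintro τ ⟨π, h⟩
    rw [Subgroup.mem_center_iff]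
    intro σ
    apply hρ_inj
    apply Equiv.ext
    intro χ
    apply hrows
    funext j
    simp only
    rw [← hρ, ← hρ, AlgEquiv.mul_apply, AlgEquiv.mul_apply, hρ σ, h, h, hρ σ]
end

section
/- Let (A, B) be a commutative nonsymmetric table algebra with splitting field K and Galois group G = Gal(K/ℚ) acting faithfully on the rows of the character table. Then the restriction of complex conjugation to K is a nonidentity element of the center of G. In particular, G has a central element of order 2. -/
set_option synthInstance.maxHeartbeats 1000000
set_option maxHeartbeats 1000000


/-- For a commutative nonsymmetric table algebra with splitting
field `K` and Galois group `G = Gal(K/ℚ)` acting faithfully on the rows of the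
character table, the restriction of complex conjugation to `K` is a
nonidentity central element of `G` of order 2. -/
theorem stmt6 {r : ℕ} (hr : 0 < r) {A : Type*} [CommRing A] [Algebra ℂ A]
    [FiniteDimensional ℂ A]
    (b : Module.Basis (Fin r) ℂ A) (hb0 : b ⟨0, hr⟩ = 1)
    (st : A → A) (hst_add : ∀ x y, st (x + y) = st x + st y)
    (hst_mul : ∀ x y, st (x * y) = st y * st x)
    (hst_smul : ∀ (z : ℂ) (x : A), st (z • x) = (starRingEnd ℂ z) • st x)
    (σ : Fin r → Fin r) (hσ : ∀ i, σ (σ i) = i)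
    (hσ_ne : σ ≠ id)
    (hbst : ∀ i, st (b i) = b (σ i))
    (lam : Fin r → Fin r → Fin r → ℝ) (hlam_nonneg : ∀ i j k, 0 ≤ lam i j k)
    (hmul : ∀ i j, b i * b j = ∑ k, (lam i j k : ℂ) • b k)
    (hpseudo : ∀ i j, 0 < lam i j ⟨0, hr⟩ ↔ j = σ i)
    (χ : Fin r → (A →ₐ[ℂ] ℂ)) (hχ_inj : Function.Injective χ)
    (hχ_conj : ∀ i j, χ i (b (σ j)) = starRingEnd ℂ (χ i (b j)))
    (hχ_units : IsUnit (Matrix.of fun i j => χ i (b j)))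
    (K : IntermediateField ℚ ℂ)
    (hK : K = IntermediateField.adjoin ℚ {x : ℂ | ∃ i j, x = χ i (b j)})
    (hfd : FiniteDimensional ℚ K)
    (P : Fin r → Fin r → K) (hP : ∀ i j, (P i j : ℂ) = χ i (b j))
    (ρ : (K ≃ₐ[ℚ] K) →* Equiv.Perm (Fin r)) (hρ_inj : Function.Injective ρ)
    (hρ : ∀ (τ : K ≃ₐ[ℚ] K) (i j : Fin r), τ (P i j) = P (ρ τ i) j)
    (c : K ≃ₐ[ℚ] K) (hc : ∀ x : K, (c x : ℂ) = starRingEnd ℂ (x : ℂ)) :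
    c ≠ 1 ∧ c ∈ Subgroup.center (K ≃ₐ[ℚ] K) ∧ orderOf c = 2 := by

  have hcoe : Function.Injective ((↑) : K → ℂ) := Subtype.coe_injective
  -- determinant nonzero
  have hdet : (Matrix.of fun i j => χ i (b j)).det ≠ 0 := by
    have := (Matrix.isUnit_iff_isUnit_det _).mp hχ_units
    exact isUnit_iff_ne_zero.mp this
  -- row injectivity
  have hrow : ∀ i i' : Fin r, (∀ j, χ i (b j) = χ i' (b j)) → i = i' := by
    intro i i' h
    by_contra hne
    exact hdet (Matrix.det_zero_of_row_eq hne (funext h))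
  -- c ≠ 1
  obtain ⟨j0, hj0⟩ : ∃ j, σ j ≠ j := by
    by_contra h
    push_neg at h
    exact hσ_ne (funext h)
  obtain ⟨i0, hi0⟩ : ∃ i, χ i (b j0) ≠ χ i (b (σ j0)) := by
    by_contra h
    push_neg at h
    exact hdet (Matrix.det_zero_of_column_eq (Ne.symm hj0) fun i => by simpa using h i)
  have hnonreal : starRingEnd ℂ (χ i0 (b j0)) ≠ χ i0 (b j0) := by
    rw [← hχ_conj]
    exact fun h => hi0 h.symm
  have hcne : c ≠ 1 := by
    intro h
    apply hnonreal
    have : (c (P i0 j0) : ℂ) = (P i0 j0 : ℂ) := by rw [h]; rfl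
    rw [hc, hP] at this
    exact this
  -- c squared is 1
  have hcc : c * c = 1 := by
    apply AlgEquiv.ext
    intro x
    apply hcoe
    show ((c (c x) : ℂ)) = ((x : K) : ℂ)
    rw [hc, hc, Complex.conj_conj]
  -- key: row permutation of c corresponds to column permutation σ
  have hπ : ∀ i j, P (ρ c i) j = P i (σ j) := by
    intro i j
    apply hcoe
    rw [← hρ c i j, hc, hP, hP, hχ_conj]
  have hcenter : c ∈ Subgroup.center (K ≃ₐ[ℚ] K) := by
    rw [Subgroup.mem_center_iff]
    intro τ
    apply hρ_inj
    rw [map_mul, map_mul]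
    apply Equiv.ext
    intro i
    simp only [Equiv.Perm.mul_apply]
    apply hrow
    intro j
    rw [← hP, ← hP, hπ, ← hρ τ, ← hρ τ, hπ]
  refine ⟨hcne, hcenter, ?_⟩
  haveI : Fact (Nat.Prime 2) := ⟨by norm_num⟩
  exact orderOf_eq_prime (by rw [sq]; exact hcc) hcne
end

section
/- Let (A, B) be a commutative table algebra of rank r with standard basis B, degree map δ with values k_j = δ(b_j), order n, primitive idempotents e_0,...,e_{r-1} with e_i = (m_i/n) Σ_j (P_{i,j}/k_j) b_j^*, where P is the character table and m_i the multiplicities. Suppose Λ is a fusion with dual partition Λ*, and for I ∈ Λ* set ẽ_I = Σ_{i∈I} e_i, and let P̃, m̃, k̃ be the character table, multiplicities, and degrees of the fused algebra, with ẽ_I = (m̃_I/n) Σ_{J∈Λ} (P̃_{I,J}/k̃_J) b̃_J^*. Then for all J ∈ Λ and j ∈ J: Σ_{i∈I} m_i P_{i,j} = (k_j m̃_I / k̃_J) P̃_{I,J}. -/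
/-- Bannai–Song fusion condition on columns: comparing the
coefficients of `b_{j*}` in the two expressions for the fused primitive
idempotent `ẽ_I = ∑_{i ∈ I} e_i` gives, for every fused basis index `J` and
every `j ∈ J`:  `∑_{i ∈ I} m_i P_{i,j} = (k_j m̃_I / k̃_J) P̃_{I,J}`. -/
theorem stmt15 {r s : ℕ} {A : Type*} [CommRing A] [Algebra ℂ A]
    [FiniteDimensional ℂ A]
    (b : Module.Basis (Fin r) ℂ A)
    (σ : Fin r → Fin r) (hσ : ∀ i, σ (σ i) = i)
    (n : ℂ) (hn : n ≠ 0)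
    (m k : Fin r → ℂ) (hk : ∀ j, k j ≠ 0)
    (P : Fin r → Fin r → ℂ)
    (e : Fin r → A)
    (he : ∀ i, e i = (m i / n) • ∑ j, (P i j / k j) • b (σ j))
    -- the fused algebra data: blocks `Jb` partition the index set
    (Jb : Fin s → Finset (Fin r))
    (hdisj : ∀ J J' : Fin s, J ≠ J' → Disjoint (Jb J) (Jb J'))
    (hcover : ∀ j : Fin r, ∃ J : Fin s, j ∈ Jb J)
    -- dual block `I`, fused multiplicity `m̃_I`, degrees `k̃`, character row `P̃_{I,·}`
    (I : Finset (Fin r)) (tm : ℂ) (tk : Fin s → ℂ) (htk : ∀ J, tk J ≠ 0)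
    (tP : Fin s → ℂ)
    (hfused : ∑ i ∈ I, e i =
      (tm / n) • ∑ J : Fin s, (tP J / tk J) • (∑ j ∈ Jb J, b (σ j))) :
    ∀ J : Fin s, ∀ j ∈ Jb J,
      ∑ i ∈ I, m i * P i j = (k j * tm / tk J) * tP J := by
  intro J j hj
  have hσinj : Function.Injective σ := Function.LeftInverse.injective hσ
  have h := congrArg (fun x => b.repr x (σ j)) hfused
  simp only [he, map_sum, map_smul, Finsupp.smul_apply, Module.Basis.repr_self, Finset.sum_apply',
    Finsupp.single_apply, hσinj.eq_iff, smul_eq_mul, Finset.sum_ite_eq',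
    Finset.mem_univ, if_true, mul_ite, mul_one, mul_zero] at h
  rw [Finset.sum_eq_single J
      (fun J' _ hJ' => if_neg (fun hmem => Finset.disjoint_left.mp (hdisj J' J hJ') hmem hj))
      (fun hJ => absurd (Finset.mem_univ J) hJ), if_pos hj] at h
  calc ∑ i ∈ I, m i * P i j
      = (n * k j) * ∑ i ∈ I, m i / n * (P i j / k j) := by
        rw [Finset.mul_sum]; exact Finset.sum_congr rfl fun i _ => by
          rw [show n * k j * (m i / n * (P i j / k j))
              = (n / n) * ((k j / k j) * (m i * P i j)) by ring,
            div_self hn, div_self (hk j), one_mul, one_mul]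
    _ = (n * k j) * (tm / n * (tP J / tk J)) := by rw [h]
    _ = k j * tm / tk J * tP J := by
        rw [show (n * k j) * (tm / n * (tP J / tk J))
            = (n / n) * (k j * tm / tk J * tP J) by ring, div_self hn, one_mul]
end
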